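/- Let G be a finite weighted directed graph with edges labeled 'weak' or 'strict'. The system of difference constraints {p_j − p_i ≤ w(i,j) for weak edges, p_j − p_i < w(i,j) for strict edges, with p_0 = 0} has a real solution if and only if G contains no cycle of negative total weight and no cycle of zero total weight containing a strict edge. -/

import Mathlib

open Finset

namespace DCF

variable {V : Type*} {M : Type*} [AddCommMonoid M]

/-- total weight of the walk starting at `a` with subsequent vertices `t` -/
def wt (φ : V × V → M) : V → List V → M
  | _, [] => 0
  | a, b :: t => φ (a, b) + wt φ b t

/-- final vertex of the walk -/
def dest : V → List V → V
  | a, [] => a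
  | _, b :: t => dest b t

/-- vertex at position `m` -/
def vtx (a : V) (t : List V) (m : ℕ) : V := dest a (t.take m)

@[simp] lemma wt_nil (φ : V × V → M) (a : V) : wt φ a [] = 0 := rfl
@[simp] lemma wt_cons (φ : V × V → M) (a b : V) (t : List V) :
    wt φ a (b :: t) = φ (a, b) + wt φ b t := rfl
@[simp] lemma dest_nil (a : V) : dest a ([] : List V) = a := rfl
@[simp] lemma dest_cons (a b : V) (t : List V) : dest a (b :: t) = dest b t := rfl
@[simp] lemma vtx_zero (a : V) (t : List V) : vtx a t 0 = a := rfl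
@[simp] lemma vtx_cons (a b : V) (t : List V) (m : ℕ) :
    vtx a (b :: t) (m + 1) = vtx b t m := rfl

lemma dest_append (a : V) (t₁ t₂ : List V) :
    dest a (t₁ ++ t₂) = dest (dest a t₁) t₂ := by
  induction t₁ generalizing a with
  | nil => simp
  | cons b t ih => simp [ih]

lemma wt_append (φ : V × V → M) (a : V) (t₁ t₂ : List V) :
    wt φ a (t₁ ++ t₂) = wt φ a t₁ + wt φ (dest a t₁) t₂ := by
  induction t₁ generalizing a with
  | nil => simp
  | cons b t ih => simp [ih, add_assoc]

lemma chain_append (R : V → V → Prop) (a : V) (t₁ t₂ : List V) :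
    List.Chain R a (t₁ ++ t₂) ↔ List.Chain R a t₁ ∧ List.Chain R (dest a t₁) t₂ := by
  induction t₁ generalizing a with
  | nil => simp [List.Chain]
  | cons b t ih => simp only [List.Chain] at ih ⊢; simp [ih, and_assoc]

lemma vtx_of_length_le (a : V) (t : List V) (m : ℕ) (h : t.length ≤ m) :
    vtx a t m = dest a t := by
  rw [vtx, List.take_of_length_le h]

lemma chain_vtx (R : V → V → Prop) (a : V) (t : List V) (h : List.Chain R a t)
    (m : ℕ) (hm : m < t.length) : R (vtx a t m) (vtx a t (m + 1)) := by
  induction t generalizing a m with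
  | nil => simp at hm
  | cons b t ih =>
    simp only [List.Chain, List.isChain_cons_cons] at h
    match m with
    | 0 =>
      have : vtx a (b :: t) 1 = b := rfl
      simp [this, h.1]
    | m + 1 =>
      simp only [vtx_cons]
      exact ih b h.2 m (by simpa using hm)

lemma vtx_succ_get (a : V) (t : List V) (m : ℕ) (hm : m < t.length) :
    vtx a t (m + 1) = t.get ⟨m, hm⟩ := by
  induction t generalizing a m with
  | nil => simp at hm
  | cons b t ih =>
    match m with
    | 0 => rfl
    | m + 1 =>
      simp only [vtx_cons]
      exact ih b m (by simpa using hm)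

lemma wt_eq_sum (φ : V × V → M) (a : V) (t : List V) :
    wt φ a t = ∑ m ∈ Finset.range t.length, φ (vtx a t m, vtx a t (m + 1)) := by
  induction t generalizing a with
  | nil => simp
  | cons b t ih =>
    rw [wt_cons, ih b, List.length_cons, Finset.sum_range_succ']
    simp only [vtx_cons, vtx_zero]
    rw [add_comm]

lemma ofFn_vtx (a : V) (t : List V) :
    List.ofFn (fun i : Fin t.length => vtx a t (↑i + 1)) = t := by
  apply List.ext_get
  · simp
  · intro i h1 h2
    simp only [List.get_ofFn]
    rw [vtx_succ_get a t _ (by simpa using h1)]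
    congr 1

lemma tele (k : ℕ) (g : Fin (k + 1) → ℝ) :
    ∑ i : Fin k, (g i.succ - g i.castSucc) = g (Fin.last k) - g 0 := by
  induction k with
  | zero => simp
  | succ k ih =>
    rw [Fin.sum_univ_castSucc]
    have := ih (fun i => g i.castSucc)
    simp only [Fin.castSucc_zero] at this
    have hcs : ∀ i : Fin k, (g (i.succ).castSucc - g (i.castSucc).castSucc)
        = g (i.castSucc).succ - g (i.castSucc).castSucc := by
      intro i; rw [Fin.succ_castSucc]
    calc ∑ i : Fin k, (g (i.castSucc).succ - g (i.castSucc).castSucc)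
          + (g (Fin.last k).succ - g (Fin.last k).castSucc)
        = (g (Fin.last k).castSucc - g 0) + (g (Fin.last k).succ - g (Fin.last k).castSucc) := by
          rw [← this]
          exact congrArg (· + _) (Finset.sum_congr rfl fun i _ => (hcs i).symm)
      _ = g (Fin.last (k+1)) - g 0 := by
          rw [Fin.succ_last]; ring_nf
  
end DCF
open Finset

theorem difference_constraints_feasibility (n : ℕ)
    (E : Finset (Fin (n + 1) × Fin (n + 1)))
    (w : Fin (n + 1) × Fin (n + 1) → ℝ)
    (strict : Fin (n + 1) × Fin (n + 1) → Bool) :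
    (∃ p : Fin (n + 1) → ℝ, p 0 = 0 ∧ ∀ e ∈ E,
        if strict e then p e.2 - p e.1 < w e else p e.2 - p e.1 ≤ w e) ↔
    ¬ ∃ (k : ℕ) (f : Fin (k + 1) → Fin (n + 1)), 0 < k ∧ f 0 = f (Fin.last k) ∧
        (∀ i : Fin k, (f i.castSucc, f i.succ) ∈ E) ∧
        (∑ i : Fin k, w (f i.castSucc, f i.succ) < 0 ∨
          (∑ i : Fin k, w (f i.castSucc, f i.succ) = 0 ∧
            ∃ i : Fin k, strict (f i.castSucc, f i.succ))) := by
  classical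
  constructor
  · -- a solution rules out bad cycles
    rintro ⟨p, hp0, hpE⟩ ⟨k, f, hk, hcyc, hE, hbad⟩
    have h0 : ∑ i : Fin k, (p (f i.succ) - p (f i.castSucc)) = 0 := by
      rw [DCF.tele k (fun i => p (f i)), ← hcyc, sub_self]
    have hle : ∀ i : Fin k, p (f i.succ) - p (f i.castSucc) ≤ w (f i.castSucc, f i.succ) := by
      intro i
      have h := hpE _ (hE i)
      split_ifs at h
      · exact h.le
      · exact h
    rcases hbad with hneg | ⟨hzero, i0, hs⟩
    · have := Finset.sum_le_sum (fun i (_ : i ∈ Finset.univ) => hle i)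
      rw [h0] at this
      linarith
    · have hlt : ∑ i : Fin k, (p (f i.succ) - p (f i.castSucc))
          < ∑ i : Fin k, w (f i.castSucc, f i.succ) := by
        refine Finset.sum_lt_sum (fun i _ => hle i) ⟨i0, Finset.mem_univ _, ?_⟩
        have h := hpE _ (hE i0)
        rw [if_pos hs] at h
        exact h
      rw [h0, hzero] at hlt
      exact lt_irrefl _ hlt
  · -- no bad cycles: construct a solution
    intro H
    let Vn := Fin (n + 1)
    let s : Vn × Vn → ℝ := fun e => if strict e then -1 else 0
    let W : Vn × Vn → ℝ ×ₗ ℝ := fun e => toLex (w e, s e)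
    let R : Vn → Vn → Prop := fun a b => (a, b) ∈ E
    have wt_comp : ∀ (t : List Vn) (a : Vn),
        DCF.wt W a t = toLex (DCF.wt w a t, DCF.wt s a t) := by
      intro t
      induction t with
      | nil => intro a; rfl
      | cons b t ih =>
        intro a
        rw [DCF.wt_cons, DCF.wt_cons, DCF.wt_cons, ih]
        rfl
    -- no bad cycle, in walk form
    have Hcyc : ∀ (a : Vn) (t : List Vn), List.Chain R a t → t ≠ [] →
        DCF.dest a t = a → 0 ≤ DCF.wt W a t := by
      intro a t hch hne hda
      by_contra hneg
      have hlt : DCF.wt W a t < 0 := not_le.mp hneg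
      apply H
      have hpos : 0 < t.length := List.length_pos_iff.mpr hne
      set k := t.length with hkdef
      let f : Fin (k + 1) → Vn := fun i => DCF.vtx a t (i : ℕ)
      have hf0 : f 0 = f (Fin.last k) := by
        show DCF.vtx a t ((0 : Fin (k+1)) : ℕ) = DCF.vtx a t ((Fin.last k : Fin (k+1)) : ℕ)
        rw [Fin.val_zero, Fin.val_last, DCF.vtx_zero, DCF.vtx_of_length_le a t k le_rfl, hda]
      have hfE : ∀ i : Fin k, (f i.castSucc, f i.succ) ∈ E := by
        intro i
        exact DCF.chain_vtx R a t hch (i : ℕ) i.isLt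
      have hsumw : ∑ i : Fin k, w (f i.castSucc, f i.succ) = DCF.wt w a t := by
        rw [DCF.wt_eq_sum,
          ← Fin.sum_univ_eq_sum_range (fun m => w (DCF.vtx a t m, DCF.vtx a t (m + 1))) k]
        exact Finset.sum_congr rfl fun i _ => rfl
      have hsums : ∑ i : Fin k, s (f i.castSucc, f i.succ) = DCF.wt s a t := by
        rw [DCF.wt_eq_sum,
          ← Fin.sum_univ_eq_sum_range (fun m => s (DCF.vtx a t m, DCF.vtx a t (m + 1))) k]
        exact Finset.sum_congr rfl fun i _ => rfl
      refine ⟨k, f, hpos, hf0, hfE, ?_⟩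
      rw [wt_comp t a] at hlt
      have hlt' : toLex ((DCF.wt w a t, DCF.wt s a t) : ℝ × ℝ)
          < toLex (((0 : ℝ), (0 : ℝ)) : ℝ × ℝ) := hlt
      rcases Prod.Lex.lt_iff.mp hlt' with h1 | ⟨h1, h2⟩
      · left; rw [hsumw]; exact h1
      · right
        refine ⟨by rw [hsumw]; exact h1, ?_⟩
        by_contra hns
        push_neg at hns
        have hzero : DCF.wt s a t = 0 := by
          rw [DCF.wt_eq_sum]
          apply Finset.sum_eq_zero
          intro m hm
          rw [Finset.mem_range] at hm
          have hns' : ¬ (strict (DCF.vtx a t m, DCF.vtx a t (m + 1)) = true) :=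
            fun hstr => hns ⟨m, hm⟩ hstr
          show (if strict (DCF.vtx a t m, DCF.vtx a t (m + 1)) then (-1 : ℝ) else 0) = 0
          rw [if_neg hns']
        rw [hzero] at h2
        exact lt_irrefl _ h2
    -- shortest-walk potentials restricted to walks of length ≤ n
    obtain ⟨d, d_le_wt, d_mem⟩ :
        ∃ d : Vn → ℝ ×ₗ ℝ,
          (∀ (a : Vn) (t : List Vn), List.Chain R a t → t.length ≤ n →
            d (DCF.dest a t) ≤ DCF.wt W a t) ∧
          (∀ v : Vn, ∃ (a : Vn) (t : List Vn), List.Chain R a t ∧ DCF.dest a t = v ∧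
            t.length ≤ n ∧ d v = DCF.wt W a t) := by
      let X := Fin (n + 1) × (Fin (n + 1) → Vn)
      let hd : X → Vn := fun x => x.2 0
      let tl : X → List Vn := fun x =>
        List.ofFn (fun i : Fin (x.1 : ℕ) => x.2 ⟨(i : ℕ) + 1, by
          have h1 := i.isLt; have h2 := x.1.isLt; omega⟩)
      have tl_len : ∀ x : X, (tl x).length ≤ n := by
        intro x
        have h2 := x.1.isLt
        simp only [tl, List.length_ofFn]
        omega
      let val : Vn → X → ℝ ×ₗ ℝ := fun v x =>
        if List.Chain R (hd x) (tl x) ∧ DCF.dest (hd x) (tl x) = v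
        then DCF.wt W (hd x) (tl x) else 0
      let cand : Vn → Finset (ℝ ×ₗ ℝ) := fun v => insert 0 (Finset.image (val v) Finset.univ)
      have candne : ∀ v, (cand v).Nonempty := fun v => Finset.insert_nonempty _ _
      refine ⟨fun v => (cand v).min' (candne v), ?_, ?_⟩
      · intro a t hch hlen
        -- encode the walk as an element of X
        let x : X := (⟨t.length, by omega⟩, fun j => DCF.vtx a t (j : ℕ))
        have hhd : hd x = a := rfl
        have htl : tl x = t := DCF.ofFn_vtx a t
        have hval : val (DCF.dest a t) x = DCF.wt W a t := by
          simp only [val, hhd, htl]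
          rw [if_pos ⟨hch, trivial⟩]
        apply Finset.min'_le
        refine Finset.mem_insert_of_mem (Finset.mem_image.mpr ⟨x, Finset.mem_univ x, hval⟩)
      · intro v
        have hmem := Finset.min'_mem (cand v) (candne v)
        rw [Finset.mem_insert] at hmem
        rcases hmem with h | h
        · refine ⟨v, [], List.Chain.nil, rfl, by simp, ?_⟩
          show (cand v).min' (candne v) = DCF.wt W v []
          rw [h]
          rfl
        · rw [Finset.mem_image] at h
          obtain ⟨x, -, hx⟩ := h
          by_cases hc : List.Chain R (hd x) (tl x) ∧ DCF.dest (hd x) (tl x) = v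
          · refine ⟨hd x, tl x, hc.1, hc.2, tl_len x, ?_⟩
            show (cand v).min' (candne v) = DCF.wt W (hd x) (tl x)
            rw [← hx]
            simp only [val]
            rw [if_pos hc]
          · refine ⟨v, [], List.Chain.nil, rfl, by simp, ?_⟩
            show (cand v).min' (candne v) = DCF.wt W v []
            rw [← hx]
            simp only [val]
            rw [if_neg hc]
            rfl
    -- main lemma: d is below the weight of every walk
    have key : ∀ (N : ℕ) (a : Vn) (t : List Vn), t.length ≤ N → List.Chain R a t →
        d (DCF.dest a t) ≤ DCF.wt W a t := by
      intro N
      induction N with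
      | zero =>
        intro a t ht hch
        exact d_le_wt a t hch (by omega)
      | succ N ih =>
        intro a t ht hch
        by_cases hlen : t.length ≤ n
        · exact d_le_wt a t hch hlen
        · push_neg at hlen
          have main : ∀ (io jo : ℕ), io < jo → jo ≤ t.length →
              DCF.dest a (t.take io) = DCF.dest a (t.take jo) →
              d (DCF.dest a t) ≤ DCF.wt W a t := by
            intro io jo hio hjo hveq
            set mid := (t.take jo).drop io with hmiddef
            have h1 : t.take jo = t.take io ++ mid := by
              conv_lhs => rw [← List.take_append_drop io (t.take jo)]
              rw [List.take_take, min_eq_left hio.le]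
            have hmidlen : mid.length = jo - io := by
              rw [hmiddef, List.length_drop, List.length_take]
              omega
            have hmidne : mid ≠ [] := by
              intro h
              rw [h] at hmidlen
              simp at hmidlen
              omega
            have hchsplit : List.Chain R a (t.take jo) ∧
                List.Chain R (DCF.dest a (t.take jo)) (t.drop jo) := by
              apply (DCF.chain_append R a (t.take jo) (t.drop jo)).mp
              rw [List.take_append_drop]
              exact hch
            have hch2 : List.Chain R a (t.take io) ∧
                List.Chain R (DCF.dest a (t.take io)) mid := by
              apply (DCF.chain_append R a (t.take io) mid).mp
              rw [← h1]
              exact hchsplit.1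
            have hcyc0 : DCF.dest (DCF.dest a (t.take io)) mid = DCF.dest a (t.take io) := by
              rw [← DCF.dest_append, ← h1, ← hveq]
            have hmid_nonneg : 0 ≤ DCF.wt W (DCF.dest a (t.take io)) mid :=
              Hcyc _ mid hch2.2 hmidne hcyc0
            set t' := t.take io ++ t.drop jo with ht'def
            have hch' : List.Chain R a t' := by
              apply (DCF.chain_append R a _ _).mpr
              refine ⟨hch2.1, ?_⟩
              rw [hveq]
              exact hchsplit.2
            have hdest' : DCF.dest a t' = DCF.dest a t := by
              rw [ht'def, DCF.dest_append, hveq, ← DCF.dest_append, List.take_append_drop]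
            have hwt' : DCF.wt W a t' ≤ DCF.wt W a t := by
              have e1 : DCF.wt W a t = DCF.wt W a (t.take jo)
                  + DCF.wt W (DCF.dest a (t.take jo)) (t.drop jo) := by
                conv_lhs => rw [← List.take_append_drop jo t]
                rw [DCF.wt_append]
              have e2 : DCF.wt W a (t.take jo) = DCF.wt W a (t.take io)
                  + DCF.wt W (DCF.dest a (t.take io)) mid := by
                conv_lhs => rw [h1]
                rw [DCF.wt_append]
              have e3 : DCF.wt W a t' = DCF.wt W a (t.take io)
                  + DCF.wt W (DCF.dest a (t.take jo)) (t.drop jo) := by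
                rw [ht'def, DCF.wt_append, hveq]
              rw [e1, e2, e3]
              have := add_le_add_left
                (le_add_of_nonneg_right hmid_nonneg :
                  DCF.wt W a (t.take io) ≤ DCF.wt W a (t.take io)
                    + DCF.wt W (DCF.dest a (t.take io)) mid)
                (DCF.wt W (DCF.dest a (t.take jo)) (t.drop jo))
              exact this
            have hlen' : t'.length ≤ N := by
              rw [ht'def, List.length_append, List.length_take, List.length_drop]
              omega
            calc d (DCF.dest a t) = d (DCF.dest a t') := by rw [hdest']
              _ ≤ DCF.wt W a t' := ih a t' hlen' hch'
              _ ≤ DCF.wt W a t := hwt'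
          have hcard : Fintype.card Vn < Fintype.card (Fin (t.length + 1)) := by
            simp only [Fintype.card_fin, Vn]
            omega
          obtain ⟨i, j, hij, hvij⟩ := Fintype.exists_ne_map_eq_of_card_lt
            (fun i : Fin (t.length + 1) => DCF.vtx a t (i : ℕ)) hcard
          rcases lt_or_gt_of_ne hij with h | h
          · exact main i j h (by omega) hvij
          · exact main j i h (by omega) hvij.symm
    -- triangle inequality for d
    have tri : ∀ e ∈ E, d e.2 ≤ d e.1 + W e := by
      intro e he
      obtain ⟨a, t, hch, hdest, hlen, hdv⟩ := d_mem e.1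
      have hRe : R e.1 e.2 := by
        show (e.1, e.2) ∈ E
        rw [Prod.mk.eta]
        exact he
      have hch2 : List.Chain R a (t ++ [e.2]) := by
        apply (DCF.chain_append R a t [e.2]).mpr
        refine ⟨hch, ?_⟩
        rw [hdest]
        exact List.chain_cons.mpr ⟨hRe, List.Chain.nil⟩
      have hdest2 : DCF.dest a (t ++ [e.2]) = e.2 := by
        rw [DCF.dest_append]
        rfl
      have hk := key (t ++ [e.2]).length a (t ++ [e.2]) le_rfl hch2
      rw [hdest2, DCF.wt_append, hdest, ← hdv] at hk
      have : DCF.wt W e.1 [e.2] = W e := by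
        show W (e.1, e.2) + 0 = W e
        rw [add_zero, Prod.mk.eta]
      rw [this] at hk
      exact hk
    -- extract the real constraints
    let q1 : Vn → ℝ := fun v => (ofLex (d v)).1
    let q2 : Vn → ℝ := fun v => (ofLex (d v)).2
    have hqe : ∀ e ∈ E, q1 e.2 < q1 e.1 + w e ∨
        (q1 e.2 = q1 e.1 + w e ∧ q2 e.2 ≤ q2 e.1 + s e) := by
      intro e he
      have h := tri e he
      have h' : toLex ((q1 e.2, q2 e.2) : ℝ × ℝ)
          ≤ toLex ((q1 e.1 + w e, q2 e.1 + s e) : ℝ × ℝ) := h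
      exact Prod.Lex.le_iff.mp h'
    -- choose ε
    let c : Vn × Vn → ℝ := fun e =>
      if q1 e.2 < q1 e.1 + w e then (q1 e.1 + w e - q1 e.2) / (|q2 e.2 - q2 e.1| + 1) else 1
    have hcand : (insert (1:ℝ) (E.image c)).Nonempty := Finset.insert_nonempty _ _
    set ε := (insert (1:ℝ) (E.image c)).min' hcand with hεdef
    have hεpos : 0 < ε := by
      rw [hεdef, Finset.lt_min'_iff]
      intro y hy
      rw [Finset.mem_insert] at hy
      rcases hy with rfl | hy
      · norm_num
      · rw [Finset.mem_image] at hy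
        obtain ⟨e, he, rfl⟩ := hy
        simp only [c]
        split_ifs with hcond
        · apply div_pos (by linarith) (by positivity)
        · norm_num
    have hεle : ∀ e ∈ E, ε ≤ c e := fun e he =>
      Finset.min'_le _ _ (Finset.mem_insert_of_mem (Finset.mem_image_of_mem c he))
    refine ⟨fun v => (q1 v + ε * q2 v) - (q1 0 + ε * q2 0), sub_self _, ?_⟩
    intro e he
    have hdiff : ((q1 e.2 + ε * q2 e.2) - (q1 0 + ε * q2 0))
        - ((q1 e.1 + ε * q2 e.1) - (q1 0 + ε * q2 0))
        = (q1 e.2 - q1 e.1) + ε * (q2 e.2 - q2 e.1) := by ring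
    have hmain : (if strict e then
          (q1 e.2 - q1 e.1) + ε * (q2 e.2 - q2 e.1) < w e
        else (q1 e.2 - q1 e.1) + ε * (q2 e.2 - q2 e.1) ≤ w e) := by
      rcases hqe e he with hlt | ⟨heq, hle2⟩
      · have hc : ε ≤ (q1 e.1 + w e - q1 e.2) / (|q2 e.2 - q2 e.1| + 1) := by
          have h := hεle e he
          simp only [c] at h
          rw [if_pos hlt] at h
          exact h
        have habs : (0:ℝ) < |q2 e.2 - q2 e.1| + 1 := by positivity
        have h2 : ε * (|q2 e.2 - q2 e.1| + 1) ≤ q1 e.1 + w e - q1 e.2 :=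
          (le_div_iff₀ habs).mp hc
        have h3 : ε * (q2 e.2 - q2 e.1) ≤ ε * |q2 e.2 - q2 e.1| :=
          mul_le_mul_of_nonneg_left (le_abs_self _) hεpos.le
        have h4 : (q1 e.2 - q1 e.1) + ε * (q2 e.2 - q2 e.1) < w e := by nlinarith
        split_ifs
        · exact h4
        · exact h4.le
      · split_ifs with hs
        · have hse : s e = -1 := by
            show (if strict e then (-1:ℝ) else 0) = -1
            rw [if_pos hs]
          rw [hse] at hle2
          nlinarith
        · have hse : s e = 0 := by
            show (if strict e then (-1:ℝ) else 0) = 0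
            rw [if_neg hs]
          rw [hse] at hle2
          nlinarith
    split_ifs at hmain ⊢ with hs
    · show ((q1 e.2 + ε * q2 e.2) - (q1 0 + ε * q2 0))
        - ((q1 e.1 + ε * q2 e.1) - (q1 0 + ε * q2 0)) < w e
      rw [hdiff]; exact hmain
    · show ((q1 e.2 + ε * q2 e.2) - (q1 0 + ε * q2 0))
        - ((q1 e.1 + ε * q2 e.1) - (q1 0 + ε * q2 0)) ≤ w e
      rw [hdiff]; exact hmain
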